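/- Let T be any [Δ,k]-transversal design where k, Δ ≥ 2 and Δ ≤ k. Let U be any block of T and let t_1, t_2, …, t_Δ be any Δ nodes of T (called target-nodes), where there may be repetitions. Then for each i = 1, 2, …, Δ there is a path π_i in T from U to t_i of length at most 7, so that the paths π_1, …, π_Δ are pairwise internally-disjoint. -/

import Mathlib

/-- The bipartite graph on `ν ⊕ β` (nodes on the left, blocks on the right)
determined by the adjacency relation `adj`. -/
def bipGraph {ν β : Type} (adj : ν → β → Prop) : SimpleGraph (ν ⊕ β) :=
  SimpleGraph.fromRel fun u v => ∃ x b, u = Sum.inl x ∧ v = Sum.inr b ∧ adj x b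

/-- A `[Δ,k]`-transversal design: the nodes form a set of size `Δ * k` partitioned
into `Δ` groups (the fibres of `group`), each of size `k`; there are `k ^ 2` blocks;
every block is adjacent to exactly one node of each group; and every pair of nodes
lying in distinct groups is adjacent to exactly one common block (the block
*generated* by the pair). -/
structure IsTransversalDesign {ν β : Type} (Δ k : ℕ)
    (group : ν → Fin Δ) (adj : ν → β → Prop) : Prop where
  two_le_k : 2 ≤ k
  two_le_Δ : 2 ≤ Δ
  groupCard : ∀ i : Fin Δ, Nat.card {x : ν // group x = i} = k
  blockCard : Nat.card β = k ^ 2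
  blockMeets : ∀ (b : β) (i : Fin Δ), ∃! x : ν, group x = i ∧ adj x b
  pairGen : ∀ x y : ν, group x ≠ group y → ∃! b : β, adj x b ∧ adj y b

/-- A family of walks (with sources `s i` and destinations `t i`) is pairwise
internally-disjoint if every vertex which is a source or destination of some member
of the family appears on members of the family only as their source or destination,
and every vertex which is not a source or destination of any member of the family
lies on at most one member of the family. -/
def PairwiseInternallyDisjoint {V ι : Type} {G : SimpleGraph V} {s t : ι → V}
    (p : (i : ι) → G.Walk (s i) (t i)) : Prop :=
  (∀ i j : ι, ∀ v : V, v ∈ (p i).support → (v = s j ∨ v = t j) → v = s i ∨ v = t i) ∧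
  (∀ i j : ι, ∀ v : V, (∀ l : ι, v ≠ s l ∧ v ≠ t l) →
    v ∈ (p i).support → v ∈ (p j).support → i = j)

/-- A family of walks is pairwise edge-disjoint if every edge lies on at most one
member of the family. -/
def PairwiseEdgeDisjoint {V ι : Type} {G : SimpleGraph V} {s t : ι → V}
    (p : (i : ι) → G.Walk (s i) (t i)) : Prop :=
  ∀ i j : ι, ∀ e : Sym2 V, e ∈ (p i).edges → e ∈ (p j).edges → i = j

namespace TDaux
open SimpleGraph Sum

variable {ν β : Type} {adj : ν → β → Prop}

lemma bip_adj {x : ν} {b : β} (h : adj x b) :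
    (bipGraph adj).Adj (Sum.inl x) (Sum.inr b) := by
  rw [bipGraph, SimpleGraph.fromRel_adj]
  exact ⟨by simp, Or.inl ⟨x, b, rfl, rfl, h⟩⟩

lemma bip_adj' {x : ν} {b : β} (h : adj x b) :
    (bipGraph adj).Adj (Sum.inr b) (Sum.inl x) := (bip_adj h).symm

def walk1 {x : ν} {b : β} (h : adj x b) :
    (bipGraph adj).Walk (Sum.inr b) (Sum.inl x) :=
  SimpleGraph.Walk.cons (bip_adj' h) SimpleGraph.Walk.nil

def walk3 {a x : ν} {U B : β} (h1 : adj a U) (h2 : adj a B) (h3 : adj x B) :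
    (bipGraph adj).Walk (Sum.inr U) (Sum.inl x) :=
  .cons (bip_adj' h1) (.cons (bip_adj h2) (.cons (bip_adj' h3) .nil))

def walk5 {a w x : ν} {U B C : β} (h1 : adj a U) (h2 : adj a B) (h3 : adj w B)
    (h4 : adj w C) (h5 : adj x C) :
    (bipGraph adj).Walk (Sum.inr U) (Sum.inl x) :=
  .cons (bip_adj' h1) (.cons (bip_adj h2) (.cons (bip_adj' h3)
    (.cons (bip_adj h4) (.cons (bip_adj' h5) .nil))))

lemma support_walk1 {x : ν} {b : β} (h : adj x b) :
    (walk1 (adj := adj) h).support = [Sum.inr b, Sum.inl x] := rfl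

lemma support_walk3 {a x : ν} {U B : β} (h1 : adj a U) (h2 : adj a B) (h3 : adj x B) :
    (walk3 (adj := adj) h1 h2 h3).support
      = [Sum.inr U, Sum.inl a, Sum.inr B, Sum.inl x] := rfl

lemma support_walk5 {a w x : ν} {U B C : β} (h1 : adj a U) (h2 : adj a B) (h3 : adj w B)
    (h4 : adj w C) (h5 : adj x C) :
    (walk5 (adj := adj) h1 h2 h3 h4 h5).support
      = [Sum.inr U, Sum.inl a, Sum.inr B, Sum.inl w, Sum.inr C, Sum.inl x] := rfl

lemma isPath_walk1 {x : ν} {b : β} (h : adj x b) : (walk1 (adj := adj) h).IsPath := by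
  rw [SimpleGraph.Walk.isPath_def, support_walk1]
  simp

lemma isPath_walk3 {a x : ν} {U B : β} (h1 : adj a U) (h2 : adj a B) (h3 : adj x B)
    (hUB : U ≠ B) (hax : a ≠ x) : (walk3 (adj := adj) h1 h2 h3).IsPath := by
  rw [SimpleGraph.Walk.isPath_def, support_walk3]
  simp [hUB, hax]

lemma isPath_walk5 {a w x : ν} {U B C : β} (h1 : adj a U) (h2 : adj a B) (h3 : adj w B)
    (h4 : adj w C) (h5 : adj x C) (hUB : U ≠ B) (hUC : U ≠ C) (hBC : B ≠ C)
    (haw : a ≠ w) (hax : a ≠ x) (hwx : w ≠ x) :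
    (walk5 (adj := adj) h1 h2 h3 h4 h5).IsPath := by
  rw [SimpleGraph.Walk.isPath_def, support_walk5]
  simp [hUB, hUC, hBC, haw, hax, hwx]

lemma length_walk1 {x : ν} {b : β} (h : adj x b) : (walk1 (adj := adj) h).length = 1 := rfl
lemma length_walk3 {a x : ν} {U B : β} (h1 : adj a U) (h2 : adj a B) (h3 : adj x B) :
    (walk3 (adj := adj) h1 h2 h3).length = 3 := rfl
lemma length_walk5 {a w x : ν} {U B C : β} (h1 : adj a U) (h2 : adj a B) (h3 : adj w B)
    (h4 : adj w C) (h5 : adj x C) : (walk5 (adj := adj) h1 h2 h3 h4 h5).length = 5 := rfl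

end TDaux

lemma TDassemble {V ι : Type} {G : SimpleGraph V} {sv : V} {t : ι → V}
    (p : (i : ι) → G.Walk sv (t i)) (Int : ι → Set V)
    (hsup : ∀ i v, v ∈ (p i).support → v = sv ∨ v = t i ∨ v ∈ Int i)
    (hne : ∀ i j v, v ∈ Int i → v ≠ sv ∧ v ≠ t j)
    (hdisj : ∀ i j v, v ∈ Int i → v ∈ Int j → i = j) :
    PairwiseInternallyDisjoint (s := fun _ => sv) p := by
  constructor
  · intro i j v hv hvj
    rcases hsup i v hv with h | h | h
    · exact Or.inl h
    · exact Or.inr h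
    · rcases hvj with h' | h'
      · exact absurd h' (hne i j v h).1
      · exact absurd h' (hne i j v h).2
  · intro i j v hvl hvi hvj
    have hi : v ∈ Int i := by
      rcases hsup i v hvi with h | h | h
      · exact absurd h (hvl i).1
      · exact absurd h (hvl i).2
      · exact h
    have hj : v ∈ Int j := by
      rcases hsup j v hvj with h | h | h
      · exact absurd h (hvl j).1
      · exact absurd h (hvl j).2
      · exact h
    exact hdisj i j v hi hj

/-- Let `T` be a `[Δ,k]`-transversal design with `Δ ≤ k`.  Let `U` be
any block and let `t 1, …, t Δ` be any `Δ` nodes (possibly with repetitions).  Then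
for each `i` there is a path `p i` from `U` to `t i` of length at most `7`, so that
these paths are pairwise internally-disjoint. -/
theorem transversalDesign_one_to_many_internallyDisjoint {ν β : Type} (Δ k : ℕ)
    (hΔk : Δ ≤ k)
    (group : ν → Fin Δ) (adj : ν → β → Prop)
    (hT : IsTransversalDesign Δ k group adj)
    (U : β) (t : Fin Δ → ν) :
    ∃ p : (i : Fin Δ) → (bipGraph adj).Walk (Sum.inr U) (Sum.inl (t i)),
      (∀ i, (p i).IsPath ∧ (p i).length ≤ 7) ∧ PairwiseInternallyDisjoint p := by
  classical
  obtain ⟨hk2, hΔ2, hgc, hbc, hbm, hpg⟩ := hT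
  have hβfin : Finite β := Nat.finite_of_card_ne_zero (by rw [hbc]; positivity)
  haveI : Fintype β := Fintype.ofFinite β
  choose u hu huni using fun e => hbm U e
  have hpg' := hpg
  choose blk hblk using hpg'
  -- basic uniqueness lemmas
  have hadjU : ∀ x, adj x U → x = u (group x) := fun x hx => huni (group x) x ⟨rfl, hx⟩
  have node_unique : ∀ (b : β) (x y : ν), group x = group y → adj x b → adj y b → x = y := by
    intro b x y hg hx hy
    obtain ⟨z, hz, hzu⟩ := hbm b (group x)
    rw [hzu x ⟨rfl, hx⟩, hzu y ⟨hg.symm, hy⟩]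
  have blk_unique : ∀ (x y : ν) (b b' : β), group x ≠ group y →
      adj x b → adj y b → adj x b' → adj y b' → b = b' := by
    intro x y b b' hg hx hy hx' hy'
    obtain ⟨z, hz, hzu⟩ := hpg x y hg
    rw [hzu b ⟨hx, hy⟩, hzu b' ⟨hx', hy'⟩]
  have two_u_block : ∀ (e e' : Fin Δ) (b : β), e ≠ e' → adj (u e) b → adj (u e') b → b = U := by
    intro e e' b hne hb hb'
    refine blk_unique (u e) (u e') b U ?_ hb hb' (hu e).2 (hu e').2
    rw [(hu e).1, (hu e').1]; exact hne
  have u_inj : ∀ e e', u e = u e' → e = e' := by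
    intro e e' h
    rw [← (hu e).1, ← (hu e').1, h]
  set Ifin : Finset (Fin Δ) := Finset.univ.filter (fun i => ¬ adj (t i) U) with hIfin
  set Good : Finset (Fin Δ) := Finset.univ.filter (fun e => ∀ j, t j ≠ u e) with hGood
  have mem_Ifin : ∀ i, i ∈ Ifin ↔ ¬ adj (t i) U := by intro i; simp [hIfin]
  have mem_Good : ∀ e, e ∈ Good ↔ ∀ j, t j ≠ u e := by intro e; simp [hGood]
  have htriv : ∀ i, adj (t i) U → t i = u (group (t i)) := fun i h => hadjU _ h
  -- |Ifin| ≤ |Good|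
  have hIG : Ifin.card ≤ Good.card := by
    have h1 : Goodᶜ.card ≤ Ifinᶜ.card := by
      refine Finset.card_le_card_of_injOn
        (fun e => if h : ∃ j, t j = u e then h.choose else e) ?_ ?_
      · intro e he
        simp only [Finset.mem_coe, Finset.mem_compl, mem_Good] at he
        push_neg at he
        obtain ⟨j, hj⟩ := he
        have hex : ∃ j, t j = u e := ⟨j, hj⟩
        simp only [dif_pos hex, Finset.mem_coe, Finset.mem_compl, mem_Ifin, not_not]
        rw [hex.choose_spec]
        exact (hu e).2
      · intro e he e' he' hee
        simp only [Finset.mem_coe, Finset.mem_compl, mem_Good] at he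
        simp only [Finset.mem_coe, Finset.mem_compl, mem_Good] at he'
        push_neg at he
        push_neg at he'
        have hex : ∃ j, t j = u e := he
        have hex' : ∃ j, t j = u e' := he'
        simp only [dif_pos hex, dif_pos hex'] at hee
        apply u_inj
        rw [← hex.choose_spec, ← hex'.choose_spec, hee]
    simp only [Finset.card_compl] at h1
    have h2 : Ifin.card ≤ Fintype.card (Fin Δ) := Finset.card_le_univ _
    have h3 : Good.card ≤ Fintype.card (Fin Δ) := Finset.card_le_univ _
    omega
  by_cases hHard : ∃ c, c ∈ Good ∧ (∀ i ∈ Ifin, group (t i) = c) ∧ Good.card = Ifin.card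
  · -- HARD case: all non-trivial targets in one good group `c`
    obtain ⟨c, hcG, hcAll, hcCard⟩ := hHard
    have hcGood : ∀ j, t j ≠ u c := (mem_Good c).mp hcG
    have hIne : Ifin.Nonempty := by
      rw [← Finset.card_pos, ← hcCard]
      exact Finset.card_pos.mpr ⟨c, hcG⟩
    obtain ⟨istar, histar⟩ := hIne
    have histar' : ¬ adj (t istar) U := (mem_Ifin istar).mp histar
    have hgistar : group (t istar) = c := hcAll istar histar
    have hcard2 : Fintype.card {i // i ∈ Ifin.erase istar} ≤ (Good.erase c).card := by
      rw [Fintype.card_coe, Finset.card_erase_of_mem histar, Finset.card_erase_of_mem hcG]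
      omega
    obtain ⟨f, hf⟩ := Function.Embedding.exists_of_card_le_finset hcard2
    set e_ : (i : Fin Δ) → ¬ adj (t i) U → i ≠ istar → Fin Δ :=
      fun i h h2 => f ⟨i, Finset.mem_erase.mpr ⟨h2, (mem_Ifin i).mpr h⟩⟩ with he_def
    have he_mem : ∀ (i : Fin Δ) (h : ¬ adj (t i) U) (h2 : i ≠ istar),
        e_ i h h2 ∈ Good.erase c := fun i h h2 => hf ⟨_, rfl⟩
    have he_good : ∀ (i : Fin Δ) (h : ¬ adj (t i) U) (h2 : i ≠ istar) (j : Fin Δ),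
        t j ≠ u (e_ i h h2) :=
      fun i h h2 => (mem_Good _).mp (Finset.mem_of_mem_erase (he_mem i h h2))
    have he_nec : ∀ (i : Fin Δ) (h : ¬ adj (t i) U) (h2 : i ≠ istar), e_ i h h2 ≠ c :=
      fun i h h2 => (Finset.mem_erase.mp (he_mem i h h2)).1
    have he_ne : ∀ (i : Fin Δ) (h : ¬ adj (t i) U) (h2 : i ≠ istar),
        e_ i h h2 ≠ group (t i) := by
      intro i h h2
      rw [hcAll i ((mem_Ifin i).mpr h)]
      exact he_nec i h h2
    have he_inj : ∀ (i : Fin Δ) (h : ¬ adj (t i) U) (h2 : i ≠ istar)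
        (i' : Fin Δ) (h' : ¬ adj (t i') U) (h2' : i' ≠ istar),
        e_ i h h2 = e_ i' h' h2' → i = i' := by
      intro i h h2 i' h' h2' hh
      have := f.injective hh
      exact congrArg Subtype.val this
    have hgrpne : ∀ (i : Fin Δ) (h : ¬ adj (t i) U) (h2 : i ≠ istar),
        group (u (e_ i h h2)) ≠ group (t i) := by
      intro i h h2
      rw [(hu (e_ i h h2)).1]
      exact he_ne i h h2
    set Be : (i : Fin Δ) → (h : ¬ adj (t i) U) → (h2 : i ≠ istar) → β :=
      fun i h h2 => blk (u (e_ i h h2)) (t i) (hgrpne i h h2) with hBe_def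
    have hBe1 : ∀ (i : Fin Δ) (h : ¬ adj (t i) U) (h2 : i ≠ istar),
        adj (u (e_ i h h2)) (Be i h h2) := fun i h h2 => (hblk _ _ _).1.1
    have hBe2 : ∀ (i : Fin Δ) (h : ¬ adj (t i) U) (h2 : i ≠ istar),
        adj (t i) (Be i h h2) := fun i h h2 => (hblk _ _ _).1.2
    have hBeU : ∀ (i : Fin Δ) (h : ¬ adj (t i) U) (h2 : i ≠ istar), Be i h h2 ≠ U :=
      fun i h h2 heq => h (heq ▸ hBe2 i h h2)
    -- choose a group `d ≠ c` and the long-path data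
    obtain ⟨d, hd⟩ := Fintype.exists_ne_of_one_lt_card
      (by rw [Fintype.card_fin]; omega : 1 < Fintype.card (Fin Δ)) c
    haveI : ∀ e : Fin Δ, Finite {x : ν // group x = e} := by
      intro e
      apply Nat.finite_of_card_ne_zero
      rw [hgc e]
      omega
    haveI : Fintype {x : ν // group x = d} := Fintype.ofFinite _
    set K : Finset β := Finset.univ.filter (fun b => adj (t istar) b) with hK
    have hgrpd : ∀ x : {x : ν // group x = d}, group (t istar) ≠ group x.1 := by
      intro x
      rw [hgistar, x.2]
      exact fun hh => hd hh.symm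
    have hkK : k ≤ K.card := by
      have hcardd : Fintype.card {x : ν // group x = d} = k := by
        rw [← Nat.card_eq_fintype_card, hgc d]
      rw [← hcardd, ← Fintype.card_coe K]
      have hmem : ∀ x : {x : ν // group x = d}, blk (t istar) x.1 (hgrpd x) ∈ K := by
        intro x
        rw [hK]
        exact Finset.mem_filter.mpr ⟨Finset.mem_univ _, (hblk _ _ _).1.1⟩
      refine Fintype.card_le_of_injective (fun x => ⟨blk (t istar) x.1 (hgrpd x), hmem x⟩) ?_
      intro x y hxy
      simp only [Subtype.mk.injEq] at hxy
      apply Subtype.ext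
      refine node_unique (blk (t istar) x.1 (hgrpd x)) x.1 y.1 (by rw [x.2, y.2])
        (hblk _ _ _).1.2 ?_
      rw [hxy]
      exact (hblk _ _ _).1.2
    have hbadne : ∀ b, adj (t istar) b → ∀ (hex : ∃ e, adj (u e) b), hex.choose ≠ c := by
      intro b hb hex hcc
      have h1 : adj (u hex.choose) b := hex.choose_spec
      rw [hcc] at h1
      have := node_unique b (u c) (t istar) (by rw [(hu c).1, hgistar]) h1 hb
      exact hcGood istar this.symm
    set Badb : Finset β := K.filter (fun b => ∃ e, adj (u e) b) with hBadb
    have hBadcard : Badb.card ≤ (Finset.univ.erase c).card := by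
      refine Finset.card_le_card_of_injOn
        (fun b => if h : ∃ e, adj (u e) b then h.choose else c) ?_ ?_
      · intro b hb
        simp only [Finset.mem_coe, hBadb, Finset.mem_filter, hK, Finset.mem_univ, true_and] at hb
        obtain ⟨hb1, hb2⟩ := hb
        have hex : ∃ e, adj (u e) b := hb2
        simp only [dif_pos hex]
        exact Finset.mem_erase.mpr ⟨hbadne b hb1 hex, Finset.mem_univ _⟩
      · intro b hb b' hb' hbb
        simp only [Finset.mem_coe, hBadb, Finset.mem_filter, hK, Finset.mem_univ,
          true_and] at hb hb'
        obtain ⟨hb1, hb2⟩ := hb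
        obtain ⟨hb1', hb2'⟩ := hb'
        have hex : ∃ e, adj (u e) b := hb2
        have hex' : ∃ e, adj (u e) b' := hb2'
        simp only [dif_pos hex, dif_pos hex'] at hbb
        have h1 : adj (u hex.choose) b := hex.choose_spec
        have h1' : adj (u hex'.choose) b' := hex'.choose_spec
        rw [← hbb] at h1'
        refine blk_unique (u hex.choose) (t istar) b b' ?_ h1 hb1 h1' hb1'
        rw [(hu _).1, hgistar]
        exact hbadne b hb1 hex
    have hCex : ∃ b, b ∈ K ∧ b ∉ Badb := by
      by_contra hcon
      push_neg at hcon
      have hsub : K ⊆ Badb := fun b hb => hcon b hb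
      have h8 := Finset.card_le_card hsub
      have h9 : (Finset.univ.erase c).card = Δ - 1 := by
        rw [Finset.card_erase_of_mem (Finset.mem_univ _), Finset.card_univ, Fintype.card_fin]
      omega
    obtain ⟨Cstar, hCK, hCBad⟩ := hCex
    have hC1 : adj (t istar) Cstar := by
      rw [hK] at hCK
      exact (Finset.mem_filter.mp hCK).2
    have hC2 : ∀ e, ¬ adj (u e) Cstar := by
      intro e he
      exact hCBad (by rw [hBadb]; exact Finset.mem_filter.mpr ⟨hCK, ⟨e, he⟩⟩)
    obtain ⟨wn, hwn, -⟩ := hbm Cstar d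
    have hwgrp : group wn = d := hwn.1
    have hwC : adj wn Cstar := hwn.2
    have hw_ne_u : ∀ e, wn ≠ u e := by
      intro e he
      apply hC2 e
      rw [← he]
      exact hwC
    have hw_not_target : ∀ j, t j ≠ wn := by
      intro j hj
      by_cases hjU : adj (t j) U
      · apply hw_ne_u (group (t j))
        rw [← hj]
        exact htriv j hjU
      · have hgj : group (t j) = c := hcAll j ((mem_Ifin j).mpr hjU)
        rw [hj, hwgrp] at hgj
        exact hd hgj
    have hgrpcw : group (u c) ≠ group wn := by
      rw [(hu c).1, hwgrp]
      exact fun hh => hd hh.symm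
    set Bstar : β := blk (u c) wn hgrpcw with hBs
    have hBs1 : adj (u c) Bstar := (hblk _ _ _).1.1
    have hBs2 : adj wn Bstar := (hblk _ _ _).1.2
    have hBsU : Bstar ≠ U := by
      intro hh
      apply hw_ne_u (group wn)
      apply hadjU
      rw [← hh]
      exact hBs2
    have hCU : Cstar ≠ U := fun hh => histar' (hh ▸ hC1)
    have hBsC : Bstar ≠ Cstar := fun hh => hC2 c (hh ▸ hBs1)
    have hucw : u c ≠ wn := fun hh => hw_ne_u c hh.symm
    have hwt : wn ≠ t istar := fun hh => hw_not_target istar hh.symm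
    set Int : Fin Δ → Set (ν ⊕ β) := fun i =>
      if h : adj (t i) U then ∅
      else if h2 : i = istar then
        {Sum.inl (u c), Sum.inr Bstar, Sum.inl wn, Sum.inr Cstar}
      else {Sum.inl (u (e_ i h h2)), Sum.inr (Be i h h2)} with hInt_def
    -- long internal set and short internal sets are disjoint
    have hLS : ∀ (j : Fin Δ) (h : ¬ adj (t j) U) (h2 : j ≠ istar) (v : ν ⊕ β),
        v ∈ ({Sum.inl (u c), Sum.inr Bstar, Sum.inl wn, Sum.inr Cstar} : Set (ν ⊕ β)) →
        v ∈ ({Sum.inl (u (e_ j h h2)), Sum.inr (Be j h h2)} : Set (ν ⊕ β)) → False := by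
      intro j h h2 v hv1 hv2
      simp only [Set.mem_insert_iff, Set.mem_singleton_iff] at hv1 hv2
      rcases hv2 with rfl | rfl
      · rcases hv1 with hv | hv | hv | hv
        · have : u (e_ j h h2) = u c := by simpa using hv
          exact he_nec j h h2 (u_inj _ _ this)
        · simp at hv
        · have : u (e_ j h h2) = wn := by simpa using hv
          exact hw_ne_u (e_ j h h2) this.symm
        · simp at hv
      · rcases hv1 with hv | hv | hv | hv
        · simp at hv
        · have hBB : Be j h h2 = Bstar := by simpa using hv
          apply hBeU j h h2
          refine two_u_block (e_ j h h2) c (Be j h h2) (he_nec j h h2) (hBe1 j h h2) ?_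
          rw [hBB]
          exact hBs1
        · simp at hv
        · have hBC : Be j h h2 = Cstar := by simpa using hv
          apply hC2 (e_ j h h2)
          rw [← hBC]
          exact hBe1 j h h2
    have hne : ∀ i j v, v ∈ Int i → v ≠ Sum.inr U ∧ v ≠ Sum.inl (t j) := by
      intro i j v hv
      simp only [hInt_def] at hv
      by_cases h : adj (t i) U
      · simp only [dif_pos h] at hv
        exact absurd hv (Set.notMem_empty v)
      · simp only [dif_neg h] at hv
        by_cases h2 : i = istar
        · simp only [dif_pos h2] at hv
          simp only [Set.mem_insert_iff, Set.mem_singleton_iff] at hv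
          rcases hv with rfl | rfl | rfl | rfl
          · exact ⟨by simp, by simpa using (hcGood j).symm⟩
          · exact ⟨by simpa using hBsU, by simp⟩
          · exact ⟨by simp, by simpa using (hw_not_target j).symm⟩
          · exact ⟨by simpa using hCU, by simp⟩
        · simp only [dif_neg h2] at hv
          simp only [Set.mem_insert_iff, Set.mem_singleton_iff] at hv
          rcases hv with rfl | rfl
          · exact ⟨by simp, by simpa using (he_good i h h2 j).symm⟩
          · exact ⟨by simpa using (hBeU i h h2), by simp⟩
    have hdisj : ∀ i j v, v ∈ Int i → v ∈ Int j → i = j := by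
      intro i j v hvi hvj
      simp only [hInt_def] at hvi hvj
      by_cases hi : adj (t i) U
      · simp only [dif_pos hi] at hvi
        exact absurd hvi (Set.notMem_empty v)
      by_cases hj : adj (t j) U
      · simp only [dif_pos hj] at hvj
        exact absurd hvj (Set.notMem_empty v)
      simp only [dif_neg hi] at hvi
      simp only [dif_neg hj] at hvj
      by_cases hi2 : i = istar
      · by_cases hj2 : j = istar
        · rw [hi2, hj2]
        · simp only [dif_pos hi2] at hvi
          simp only [dif_neg hj2] at hvj
          exact absurd (hLS j hj hj2 v hvi hvj) id
      · simp only [dif_neg hi2] at hvi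
        by_cases hj2 : j = istar
        · simp only [dif_pos hj2] at hvj
          exact absurd (hLS i hi hi2 v hvj hvi) id
        · simp only [dif_neg hj2] at hvj
          simp only [Set.mem_insert_iff, Set.mem_singleton_iff] at hvi hvj
          rcases hvi with rfl | rfl
          · rcases hvj with hvj | hvj
            · have : u (e_ i hi hi2) = u (e_ j hj hj2) := by simpa using hvj
              exact he_inj i hi hi2 j hj hj2 (u_inj _ _ this)
            · exact absurd hvj (by simp)
          · rcases hvj with hvj | hvj
            · exact absurd hvj (by simp)
            · have hBeq : Be i hi hi2 = Be j hj hj2 := by simpa using hvj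
              by_cases hee : e_ i hi hi2 = e_ j hj hj2
              · exact he_inj i hi hi2 j hj hj2 hee
              · exfalso
                apply hBeU i hi hi2
                refine two_u_block (e_ i hi hi2) (e_ j hj hj2) (Be i hi hi2) hee
                  (hBe1 i hi hi2) ?_
                rw [hBeq]
                exact hBe1 j hj hj2
    have hex : ∀ i : Fin Δ, ∃ w : (bipGraph adj).Walk (Sum.inr U) (Sum.inl (t i)),
        w.IsPath ∧ w.length ≤ 7 ∧
          ∀ v ∈ w.support, v = Sum.inr U ∨ v = Sum.inl (t i) ∨ v ∈ Int i := by
      intro i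
      by_cases h : adj (t i) U
      · refine ⟨TDaux.walk1 h, TDaux.isPath_walk1 h, by rw [TDaux.length_walk1]; omega, ?_⟩
        intro v hv
        rw [TDaux.support_walk1] at hv
        simp only [List.mem_cons, List.mem_singleton, List.not_mem_nil, or_false] at hv
        rcases hv with rfl | rfl
        · exact Or.inl rfl
        · exact Or.inr (Or.inl rfl)
      · by_cases h2 : i = istar
        · subst h2
          refine ⟨TDaux.walk5 (hu c).2 hBs1 hBs2 hwC hC1,
            TDaux.isPath_walk5 _ _ _ _ _ (Ne.symm hBsU) (Ne.symm hCU) hBsC hucw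
              (hcGood i).symm hwt,
            by rw [TDaux.length_walk5]; omega, ?_⟩
          intro v hv
          rw [TDaux.support_walk5] at hv
          simp only [List.mem_cons, List.mem_singleton, List.not_mem_nil, or_false] at hv
          have hInti : Int i =
              {Sum.inl (u c), Sum.inr Bstar, Sum.inl wn, Sum.inr Cstar} := by
            simp only [hInt_def, dif_neg h, dif_pos]
          rcases hv with rfl | rfl | rfl | rfl | rfl | rfl
          · exact Or.inl rfl
          · refine Or.inr (Or.inr ?_)
            rw [hInti]
            simp
          · refine Or.inr (Or.inr ?_)
            rw [hInti]
            simp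
          · refine Or.inr (Or.inr ?_)
            rw [hInti]
            simp
          · refine Or.inr (Or.inr ?_)
            rw [hInti]
            simp
          · exact Or.inr (Or.inl rfl)
        · refine ⟨TDaux.walk3 (hu (e_ i h h2)).2 (hBe1 i h h2) (hBe2 i h h2),
            TDaux.isPath_walk3 _ _ _ (Ne.symm (hBeU i h h2)) (he_good i h h2 i).symm,
            by rw [TDaux.length_walk3]; omega, ?_⟩
          intro v hv
          rw [TDaux.support_walk3] at hv
          simp only [List.mem_cons, List.mem_singleton, List.not_mem_nil, or_false] at hv
          have hInti : Int i = {Sum.inl (u (e_ i h h2)), Sum.inr (Be i h h2)} := by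
            simp only [hInt_def, dif_neg h, dif_neg h2]
          rcases hv with rfl | rfl | rfl | rfl
          · exact Or.inl rfl
          · refine Or.inr (Or.inr ?_)
            rw [hInti]
            simp
          · refine Or.inr (Or.inr ?_)
            rw [hInti]
            simp
          · exact Or.inr (Or.inl rfl)
    choose p hp1 hp2 hp3 using hex
    exact ⟨p, fun i => ⟨hp1 i, hp2 i⟩, TDassemble p Int hp3 hne hdisj⟩
  · -- EASY case: Hall's theorem gives a system of distinct representatives
    have hall : ∀ s : Finset {i // i ∈ Ifin},
        s.card ≤ (s.biUnion (fun i => Good.erase (group (t i.1)))).card := by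
      intro s
      rcases s.eq_empty_or_nonempty with rfl | ⟨i0, hi0⟩
      · simp
      have hsA : Good.erase (group (t i0.1)) ⊆
          s.biUnion (fun i => Good.erase (group (t i.1))) :=
        Finset.subset_biUnion_of_mem (fun i => Good.erase (group (t i.1))) hi0
      have hscard : s.card ≤ Ifin.card := by
        have := Finset.card_le_univ s
        rwa [Fintype.card_coe] at this
      by_cases hgrp : ∀ i ∈ s, group (t i.1) = group (t i0.1)
      · by_cases hc : group (t i0.1) ∈ Good
        · have hlt : s.card < Good.card := by
            by_contra hcon
            push_neg at hcon
            have h1 : s.card = Ifin.card := le_antisymm hscard (le_trans hIG hcon)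
            have h2 : Good.card = Ifin.card := le_antisymm (le_trans hcon hscard) hIG
            have hsuniv : s = Finset.univ := by
              apply Finset.eq_univ_of_card
              rw [h1, Fintype.card_coe]
            refine hHard ⟨group (t i0.1), hc, ?_, h2⟩
            intro i hi
            exact hgrp ⟨i, hi⟩ (hsuniv ▸ Finset.mem_univ _)
          have hcerase : (Good.erase (group (t i0.1))).card = Good.card - 1 :=
            Finset.card_erase_of_mem hc
          have := Finset.card_le_card hsA
          omega
        · have heq : Good.erase (group (t i0.1)) = Good := Finset.erase_eq_of_notMem hc
          have := Finset.card_le_card hsA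
          rw [heq] at this
          omega
      · push_neg at hgrp
        obtain ⟨i1, hi1, hne1⟩ := hgrp
        have hGsub : Good ⊆ s.biUnion (fun i => Good.erase (group (t i.1))) := by
          intro x hx
          by_cases hx0 : x = group (t i0.1)
          · exact Finset.mem_biUnion.mpr ⟨i1, hi1,
              Finset.mem_erase.mpr ⟨by rw [hx0]; exact fun hh => hne1 hh.symm, hx⟩⟩
          · exact Finset.mem_biUnion.mpr ⟨i0, hi0, Finset.mem_erase.mpr ⟨hx0, hx⟩⟩
        have := Finset.card_le_card hGsub
        omega
    obtain ⟨f, finj, hfA⟩ := (Finset.all_card_le_biUnion_card_iff_exists_injective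
      (fun i : {i // i ∈ Ifin} => Good.erase (group (t i.1)))).mp hall
    set e_ : (i : Fin Δ) → ¬ adj (t i) U → Fin Δ :=
      fun i h => f ⟨i, (mem_Ifin i).mpr h⟩ with he_def
    have he_mem : ∀ (i : Fin Δ) (h : ¬ adj (t i) U), e_ i h ∈ Good.erase (group (t i)) :=
      fun i h => hfA ⟨i, (mem_Ifin i).mpr h⟩
    have he_good : ∀ (i : Fin Δ) (h : ¬ adj (t i) U) (j : Fin Δ), t j ≠ u (e_ i h) :=
      fun i h => (mem_Good _).mp (Finset.mem_of_mem_erase (he_mem i h))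
    have he_ne : ∀ (i : Fin Δ) (h : ¬ adj (t i) U), e_ i h ≠ group (t i) :=
      fun i h => (Finset.mem_erase.mp (he_mem i h)).1
    have he_inj : ∀ (i : Fin Δ) (h : ¬ adj (t i) U) (i' : Fin Δ) (h' : ¬ adj (t i') U),
        e_ i h = e_ i' h' → i = i' := by
      intro i h i' h' hh
      have : (⟨i, (mem_Ifin i).mpr h⟩ : {i // i ∈ Ifin}) = ⟨i', (mem_Ifin i').mpr h'⟩ := finj hh
      exact congrArg Subtype.val this
    have hgrpne : ∀ (i : Fin Δ) (h : ¬ adj (t i) U), group (u (e_ i h)) ≠ group (t i) := by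
      intro i h
      rw [(hu (e_ i h)).1]
      exact he_ne i h
    set Be : (i : Fin Δ) → (h : ¬ adj (t i) U) → β :=
      fun i h => blk (u (e_ i h)) (t i) (hgrpne i h) with hBe_def
    have hBe1 : ∀ (i : Fin Δ) (h : ¬ adj (t i) U), adj (u (e_ i h)) (Be i h) :=
      fun i h => (hblk _ _ _).1.1
    have hBe2 : ∀ (i : Fin Δ) (h : ¬ adj (t i) U), adj (t i) (Be i h) :=
      fun i h => (hblk _ _ _).1.2
    have hBeU : ∀ (i : Fin Δ) (h : ¬ adj (t i) U), Be i h ≠ U :=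
      fun i h heq => h (heq ▸ hBe2 i h)
    set Int : Fin Δ → Set (ν ⊕ β) := fun i =>
      if h : adj (t i) U then ∅
      else {Sum.inl (u (e_ i h)), Sum.inr (Be i h)} with hInt_def
    have hne : ∀ i j v, v ∈ Int i → v ≠ Sum.inr U ∧ v ≠ Sum.inl (t j) := by
      intro i j v hv
      simp only [hInt_def] at hv
      by_cases h : adj (t i) U
      · simp only [dif_pos h] at hv
        exact absurd hv (Set.notMem_empty v)
      · simp only [dif_neg h] at hv
        simp only [Set.mem_insert_iff, Set.mem_singleton_iff] at hv
        rcases hv with rfl | rfl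
        · exact ⟨by simp, by simpa using (he_good i h j).symm⟩
        · exact ⟨by simpa using (hBeU i h), by simp⟩
    have hdisj : ∀ i j v, v ∈ Int i → v ∈ Int j → i = j := by
      intro i j v hvi hvj
      simp only [hInt_def] at hvi hvj
      by_cases hi : adj (t i) U
      · simp only [dif_pos hi] at hvi; exact absurd hvi (Set.notMem_empty v)
      by_cases hj : adj (t j) U
      · simp only [dif_pos hj] at hvj; exact absurd hvj (Set.notMem_empty v)
      simp only [dif_neg hi] at hvi
      simp only [dif_neg hj] at hvj
      simp only [Set.mem_insert_iff, Set.mem_singleton_iff] at hvi hvj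
      rcases hvi with rfl | rfl
      · rcases hvj with hvj | hvj
        · have : u (e_ i hi) = u (e_ j hj) := by simpa using hvj
          exact he_inj i hi j hj (u_inj _ _ this)
        · exact absurd hvj (by simp)
      · rcases hvj with hvj | hvj
        · exact absurd hvj (by simp)
        · have hBeq : Be i hi = Be j hj := by simpa using hvj
          by_cases hee : e_ i hi = e_ j hj
          · exact he_inj i hi j hj hee
          · exfalso
            apply hBeU i hi
            refine two_u_block (e_ i hi) (e_ j hj) (Be i hi) hee (hBe1 i hi) ?_
            rw [hBeq]; exact hBe1 j hj
    have hex : ∀ i : Fin Δ, ∃ w : (bipGraph adj).Walk (Sum.inr U) (Sum.inl (t i)),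
        w.IsPath ∧ w.length ≤ 7 ∧
          ∀ v ∈ w.support, v = Sum.inr U ∨ v = Sum.inl (t i) ∨ v ∈ Int i := by
      intro i
      by_cases h : adj (t i) U
      · refine ⟨TDaux.walk1 h, TDaux.isPath_walk1 h, by rw [TDaux.length_walk1]; omega, ?_⟩
        intro v hv
        rw [TDaux.support_walk1] at hv
        simp only [List.mem_cons, List.mem_singleton, List.not_mem_nil, or_false] at hv
        rcases hv with rfl | rfl
        · exact Or.inl rfl
        · exact Or.inr (Or.inl rfl)
      · refine ⟨TDaux.walk3 (hu (e_ i h)).2 (hBe1 i h) (hBe2 i h),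
          TDaux.isPath_walk3 _ _ _ (Ne.symm (hBeU i h)) (he_good i h i).symm,
          by rw [TDaux.length_walk3]; omega, ?_⟩
        intro v hv
        rw [TDaux.support_walk3] at hv
        simp only [List.mem_cons, List.mem_singleton, List.not_mem_nil, or_false] at hv
        rcases hv with rfl | rfl | rfl | rfl
        · exact Or.inl rfl
        · refine Or.inr (Or.inr ?_)
          simp only [hInt_def, dif_neg h]
          simp
        · refine Or.inr (Or.inr ?_)
          simp only [hInt_def, dif_neg h]
          simp
        · exact Or.inr (Or.inl rfl)
    choose p hp1 hp2 hp3 using hex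
    exact ⟨p, fun i => ⟨hp1 i, hp2 i⟩, TDassemble p Int hp3 hne hdisj⟩
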